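/- The Witt superalgebra W(m,n) is generated by its local part: W = alg(W_{−1} + W_0 + W_1), i.e., the subalgebra generated by the components of degrees −1, 0 and 1 is all of W. -/

import Mathlib

open Finset

namespace Cartan

/-- Monomial index set for the divided power superalgebra `O(m,n)`:
a multi-exponent `α : Fin m → Fin p` (divided powers truncated at `p-1`)
together with a subset of the odd variables. -/
abbrev Mon (p m n : ℕ) := (Fin m → Fin p) × Finset (Fin n)

/-- The divided power superalgebra `O(m,n)` realized as coefficient functions on monomials. -/
abbrev O (F : Type*) [Field F] (p m n : ℕ) := Mon p m n → F

/-- The Witt superalgebra `W(m,n)` realized as tuples of coefficients: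
`D : W` represents `∑ i, D i · ∂ i`. -/
abbrev W (F : Type*) [Field F] (p m n : ℕ) := Fin (m + n) → O F p m n

variable {F : Type*} [Field F] {p m n : ℕ}

/-- `ℤ₂`-parity of a monomial. -/
def parMon (μ : Mon p m n) : ZMod 2 := (μ.2.card : ZMod 2)

/-- `ℤ`-degree of a monomial (each variable has degree 1). -/
def zdMon (μ : Mon p m n) : ℕ := (∑ i, (μ.1 i : ℕ)) + μ.2.card

/-- Parity of the index `i`: even if `i < m`, odd otherwise. -/
def parIdx (m : ℕ) {k : ℕ} (i : Fin k) : ZMod 2 := if (i : ℕ) < m then 0 else 1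

/-- The constant function `1 ∈ O(m,n)`. -/
def oneO (F : Type*) [Field F] (p m n : ℕ) [NeZero p] : O F p m n :=
  fun μ => if μ.1 = 0 ∧ μ.2 = (∅ : Finset (Fin n)) then 1 else 0

/-- Koszul sign for multiplying exterior monomials `x^s · x^t`. -/
def extSign {n : ℕ} (s t : Finset (Fin n)) : ℤ :=
  (-1) ^ ∑ i ∈ t, (s.filter fun j => i < j).card

/-- Multiplication of the divided power superalgebra `O(m,n)`:
`x^(α)x^u · x^(β)x^v = (Koszul sign) · ∏ binom(α+β,α) · x^(α+β) x^(u∪v)`. -/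
def mulO [NeZero p] (f g : O F p m n) : O F p m n := fun μ =>
  ∑ ν : Mon p m n, ∑ κ : Mon p m n,
    if (∀ i, (ν.1 i : ℕ) + (κ.1 i : ℕ) = (μ.1 i : ℕ)) ∧ ν.2 ∩ κ.2 = ∅ ∧ ν.2 ∪ κ.2 = μ.2 then
      ((extSign ν.2 κ.2 : ℤ) : F) * (∏ i, (((μ.1 i : ℕ).choose (ν.1 i : ℕ) : ℕ) : F))
        * f ν * g κ
    else 0

/-- The even partial superderivation `∂_i`, `i ≤ m`, on `O(m,n)`. -/
def dEv [NeZero p] (i : Fin m) (f : O F p m n) : O F p m n := fun μ =>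
  if h : (μ.1 i : ℕ) + 1 < p then f (Function.update μ.1 i ⟨(μ.1 i : ℕ) + 1, h⟩, μ.2) else 0

/-- The odd partial superderivation `∂_{m+i}` on `O(m,n)`. -/
def dOd (i : Fin n) (f : O F p m n) : O F p m n := fun μ =>
  if i ∈ μ.2 then 0
  else ((-1 : F)) ^ (μ.2.filter fun j => j < i).card * f (μ.1, insert i μ.2)

/-- The partial superderivation `∂_i`, `i ∈ I = {1,…,m+n}`. -/
def pd [NeZero p] (i : Fin (m + n)) (f : O F p m n) : O F p m n :=
  Sum.elim (fun j => dEv j f) (fun j => dOd j f) (finSumFinEquiv.symm i)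

/-- The variable `x_i` as an element of `O(m,n)`. -/
def xVar [NeZero p] (i : Fin (m + n)) : O F p m n := fun μ =>
  if h : (i : ℕ) < m then
    (if μ.1 = Pi.single (⟨i, h⟩ : Fin m) 1 ∧ μ.2 = (∅ : Finset (Fin n)) then 1 else 0)
  else
    (if μ.1 = 0 ∧ μ.2 = {(⟨(i : ℕ) - m, by have := i.isLt; omega⟩ : Fin n)} then 1 else 0)

/-- Projection of `f ∈ O(m,n)` onto its parity-`b` component. -/
def projO (b : ZMod 2) (f : O F p m n) : O F p m n :=
  fun μ => if parMon μ = b then f μ else 0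

/-- Projection of `D ∈ W(m,n)` onto its parity-`b` component
(the parity of `f ∂_i` is `|f| + |∂_i|`). -/
def projW (b : ZMod 2) (D : W F p m n) : W F p m n :=
  fun i => projO (b + parIdx m i) (D i)

/-- `f` is `ℤ₂`-homogeneous of parity `b`. -/
def isParO (b : ZMod 2) (f : O F p m n) : Prop := ∀ μ, f μ ≠ 0 → parMon μ = b

/-- `D` is `ℤ₂`-homogeneous of parity `b`. -/
def isParW (b : ZMod 2) (D : W F p m n) : Prop := ∀ i, isParO (b + parIdx m i) (D i)

/-- Action of a superderivation `D = ∑ f_i ∂_i` on `g ∈ O(m,n)`: `D(g) = ∑ f_i · ∂_i(g)`. -/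
def act [NeZero p] (D : W F p m n) (g : O F p m n) : O F p m n :=
  ∑ i, mulO (D i) (pd i g)

/-- Super-commutator bracket on `W(m,n)`, extended bilinearly from homogeneous components:
`[D,E] = D∘E - (-1)^{|D||E|} E∘D`, recorded via values on the generators `x_k`. -/
def bracketW [NeZero p] (D E : W F p m n) : W F p m n :=
  ∑ a : ZMod 2, ∑ b : ZMod 2,
    (fun k => act (projW a D) (projW b E k)
      - ((-1 : F)) ^ (a * b).val • act (projW b E) (projW a D k) : W F p m n)

/-- Divergence: `div(f ∂_i) = (-1)^{|f||∂_i|} ∂_i(f)`, extended linearly. -/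
def divW [NeZero p] (D : W F p m n) : O F p m n :=
  ∑ i, ∑ b : ZMod 2, ((-1 : F)) ^ (b * parIdx m i).val • pd i (projO b (D i))

/-- The Euler (degree) derivation `𝔇 = ∑ x_k ∂_k`. -/
def euler (F : Type*) [Field F] (p m n : ℕ) [NeZero p] : W F p m n := fun i => xVar i

/-- The derivation `f𝔇 = ∑ (f·x_k) ∂_k`. -/
def fEuler [NeZero p] (f : O F p m n) : W F p m n := fun i => mulO f (xVar i)

/-- `f` is `ℤ`-homogeneous of degree `s` (i.e. `f ∈ O_s`). -/
def inO (s : ℤ) (f : O F p m n) : Prop := ∀ μ, f μ ≠ 0 → (zdMon μ : ℤ) = s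

/-- `D ∈ W_s` for the standard grading (`zd(f∂_i) = zd(f) - 1`). -/
def inW (s : ℤ) (D : W F p m n) : Prop := ∀ i, inO (s + 1) (D i)

/-- The superderivation `∂_i` as an element of `W(m,n)`. -/
def delOp (F : Type*) [Field F] (p m n : ℕ) [NeZero p] (i : Fin (m + n)) : W F p m n :=
  fun k => if k = i then oneO F p m n else 0

/-- The `ℤ`-graded component `W_s` as a submodule. -/
def Wgrade (F : Type*) [Field F] (p m n : ℕ) (s : ℤ) : Submodule F (W F p m n) where
  carrier := {D | inW s D}
  add_mem' := by
    intro a b ha hb i μ h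
    by_cases h1 : a i μ = 0
    · exact hb i μ (by simpa [h1] using h)
    · exact ha i μ h1
  zero_mem' := by intro i μ h; simp at h
  smul_mem' := by
    intro c a ha i μ h
    refine ha i μ (fun h1 => h ?_)
    simp [h1]


/-- The Lie subalgebra (over `F`) of `W(m,n)` generated by a subset `S`. -/
inductive genBy [NeZero p] (S : Set (W F p m n)) : W F p m n → Prop
  | base {x : W F p m n} : x ∈ S → genBy S x
  | zero : genBy S 0
  | add {x y : W F p m n} : genBy S x → genBy S y → genBy S (x + y)
  | smul (c : F) {x : W F p m n} : genBy S x → genBy S (c • x)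
  | br {x y : W F p m n} : genBy S x → genBy S y → genBy S (bracketW x y)


section LocalGen

variable {F : Type*} [Field F] {p m n : ℕ} [NeZero p]

/-- Delta function of a monomial. -/
def delta (ν : Mon p m n) : O F p m n := fun μ => if μ = ν then 1 else 0

/-- Exponent of variable `i` in the monomial `μ`. -/
def expOf (μ : Mon p m n) (i : Fin (m + n)) : ℕ :=
  if h : (i : ℕ) < m then (μ.1 ⟨i, h⟩ : ℕ)
  else if (⟨(i : ℕ) - m, by have := i.isLt; omega⟩ : Fin n) ∈ μ.2 then 1 else 0

/-- Decrease the exponent of variable `i` by one. -/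
def subV (i : Fin (m + n)) (μ : Mon p m n) : Mon p m n :=
  if h : (i : ℕ) < m then
    (Function.update μ.1 ⟨i, h⟩
      ⟨(μ.1 ⟨i, h⟩ : ℕ) - 1, lt_of_le_of_lt (Nat.sub_le _ _) (μ.1 ⟨i, h⟩).isLt⟩, μ.2)
  else (μ.1, μ.2.erase ⟨(i : ℕ) - m, by have := i.isLt; omega⟩)

/-- Increase the exponent of variable `i` by one (mod `p` truncation). -/
def addV (i : Fin (m + n)) (μ : Mon p m n) : Mon p m n :=
  if h : (i : ℕ) < m then
    (Function.update μ.1 ⟨i, h⟩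
      ⟨((μ.1 ⟨i, h⟩ : ℕ) + 1) % p, Nat.mod_lt _ (NeZero.pos p)⟩, μ.2)
  else (μ.1, insert ⟨(i : ℕ) - m, by have := i.isLt; omega⟩ μ.2)

/-- Sum of two monomials. -/
def sumV (ν κ : Mon p m n) : Mon p m n :=
  (fun j => ⟨((ν.1 j : ℕ) + (κ.1 j : ℕ)) % p, Nat.mod_lt _ (NeZero.pos p)⟩, ν.2 ∪ κ.2)

/-- The empty monomial. -/
def zeroM (p m n : ℕ) [NeZero p] : Mon p m n := (fun _ => ⟨0, NeZero.pos p⟩, ∅)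

/-- Compatibility: the product of the monomials does not vanish for size reasons. -/
def compat (ν κ : Mon p m n) : Prop :=
  ∀ j, expOf ν j + expOf κ j ≤ if (j : ℕ) < m then p - 1 else 1

lemma mon_ext {μ ν : Mon p m n} (h : ∀ i, expOf μ i = expOf ν i) : μ = ν := by
  obtain ⟨a, s⟩ := μ; obtain ⟨b, t⟩ := ν
  have h1 : a = b := by
    funext j
    have hc : ((Fin.castAdd n j : Fin (m + n)) : ℕ) < m := by simpa using j.isLt
    have := h (Fin.castAdd n j)
    simp only [expOf, dif_pos hc] at this
    have hj : (⟨((Fin.castAdd n j : Fin (m + n)) : ℕ), hc⟩ : Fin m) = j := by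
      apply Fin.ext; simp
    rw [hj] at this
    exact Fin.ext this
  have h2 : s = t := by
    ext k
    have hc : ¬ ((Fin.natAdd m k : Fin (m + n)) : ℕ) < m := by simp
    have := h (Fin.natAdd m k)
    simp only [expOf, dif_neg hc] at this
    have hj : (⟨((Fin.natAdd m k : Fin (m + n)) : ℕ) - m, by have := (Fin.natAdd m k).isLt; omega⟩ : Fin n) = k := by
      apply Fin.ext; simp
    rw [hj] at this
    by_cases hk : k ∈ s <;> by_cases hk' : k ∈ t <;> simp_all
  rw [h1, h2]

lemma zdMon_eq (μ : Mon p m n) : zdMon μ = ∑ i, expOf μ i := by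
  rw [zdMon, Fin.sum_univ_add]
  congr 1
  · apply Finset.sum_congr rfl
    intro j _
    have hc : ((Fin.castAdd n j : Fin (m + n)) : ℕ) < m := by simpa using j.isLt
    simp only [expOf, dif_pos hc]
    have hj : (⟨((Fin.castAdd n j : Fin (m + n)) : ℕ), hc⟩ : Fin m) = j := by
      apply Fin.ext; simp
    rw [hj]
  · have : ∀ k : Fin n, expOf μ (Fin.natAdd m k) = if k ∈ μ.2 then 1 else 0 := by
      intro k
      have hc : ¬ ((Fin.natAdd m k : Fin (m + n)) : ℕ) < m := by simp
      simp only [expOf, dif_neg hc]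
      have hj : (⟨((Fin.natAdd m k : Fin (m + n)) : ℕ) - m, by have := (Fin.natAdd m k).isLt; omega⟩ : Fin n) = k := by
        apply Fin.ext; simp
      rw [hj]
    rw [Finset.sum_congr rfl (fun k _ => this k)]
    simp

lemma expOf_le (μ : Mon p m n) (i : Fin (m + n)) :
    expOf μ i ≤ if (i : ℕ) < m then p - 1 else 1 := by
  by_cases h : (i : ℕ) < m
  · simp only [expOf, dif_pos h, if_pos h]
    have := (μ.1 ⟨i, h⟩).isLt
    omega
  · simp only [expOf, dif_neg h, if_neg h]
    split <;> omega

lemma expOf_subV_self (i : Fin (m + n)) (μ : Mon p m n) :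
    expOf (subV i μ) i = expOf μ i - 1 := by
  by_cases h : (i : ℕ) < m
  · simp [expOf, subV, h]
  · simp only [expOf, subV, dif_neg h]
    rw [if_neg (Finset.notMem_erase _ _)]
    split <;> omega

lemma fin_m_ne {i j : Fin (m + n)} (hne : j ≠ i) (hi : (i : ℕ) < m) (hj : (j : ℕ) < m) :
    (⟨(j : ℕ), hj⟩ : Fin m) ≠ ⟨(i : ℕ), hi⟩ := by
  intro hh
  exact hne (Fin.ext (by simpa using congrArg Fin.val hh))

lemma fin_n_ne {i j : Fin (m + n)} (hne : j ≠ i) (hi : ¬ (i : ℕ) < m) (hj : ¬ (j : ℕ) < m)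
    {a b : ℕ} (ha : (j : ℕ) - m < a → True) :
    (⟨(j : ℕ) - m, by have := j.isLt; omega⟩ : Fin n) ≠ ⟨(i : ℕ) - m, by have := i.isLt; omega⟩ := by
  intro hh
  have := congrArg Fin.val hh
  simp only at this
  exact hne (Fin.ext (by omega))

lemma expOf_subV_ne {i j : Fin (m + n)} (hne : j ≠ i) (μ : Mon p m n) :
    expOf (subV i μ) j = expOf μ j := by
  by_cases hi : (i : ℕ) < m <;> by_cases hj : (j : ℕ) < m
  · simp [expOf, subV, hi, hj, Function.update_of_ne (fin_m_ne hne hi hj)]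
  · simp [expOf, subV, hi, hj]
  · simp [expOf, subV, hi, hj]
  · simp only [expOf, subV, dif_neg hi, dif_neg hj]
    have : (⟨(j : ℕ) - m, by have := j.isLt; omega⟩ : Fin n) ≠ ⟨(i : ℕ) - m, by have := i.isLt; omega⟩ := by
      intro hh
      have := congrArg Fin.val hh
      simp only at this
      exact hne (Fin.ext (by omega))
    simp [Finset.mem_erase, this]

lemma expOf_addV_ne {i j : Fin (m + n)} (hne : j ≠ i) (μ : Mon p m n) :
    expOf (addV i μ) j = expOf μ j := by
  by_cases hi : (i : ℕ) < m <;> by_cases hj : (j : ℕ) < m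
  · simp [expOf, addV, hi, hj, Function.update_of_ne (fin_m_ne hne hi hj)]
  · simp [expOf, addV, hi, hj]
  · simp [expOf, addV, hi, hj]
  · simp only [expOf, addV, dif_neg hi, dif_neg hj]
    have : (⟨(j : ℕ) - m, by have := j.isLt; omega⟩ : Fin n) ≠ ⟨(i : ℕ) - m, by have := i.isLt; omega⟩ := by
      intro hh
      have := congrArg Fin.val hh
      simp only at this
      exact hne (Fin.ext (by omega))
    simp [Finset.mem_insert, this]

lemma expOf_addV_self_even {i : Fin (m + n)} (hi : (i : ℕ) < m) (μ : Mon p m n)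
    (hlt : expOf μ i + 1 < p) : expOf (addV i μ) i = expOf μ i + 1 := by
  simp only [expOf, dif_pos hi] at hlt ⊢
  simp [addV, dif_pos hi, Nat.mod_eq_of_lt hlt]

lemma expOf_addV_self_zero {i : Fin (m + n)} (μ : Mon p m n)
    (h0 : expOf μ i = 0) (hp1 : 1 < p) : expOf (addV i μ) i = 1 := by
  by_cases hi : (i : ℕ) < m
  · simp only [expOf, dif_pos hi] at h0 ⊢
    simp [addV, dif_pos hi, h0, Nat.mod_eq_of_lt hp1]
  · simp only [expOf, dif_neg hi] at h0 ⊢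
    simp [addV, dif_neg hi]

lemma subV_addV {i : Fin (m + n)} {μ : Mon p m n} (h0 : expOf μ i = 0) (hp1 : 1 < p) :
    subV i (addV i μ) = μ := by
  apply mon_ext
  intro j
  by_cases hj : j = i
  · subst hj
    rw [expOf_subV_self, expOf_addV_self_zero μ h0 hp1, h0]
  · rw [expOf_subV_ne hj, expOf_addV_ne hj]

lemma zdMon_shift {ν' ν : Mon p m n} (i : Fin (m + n))
    (h : ∀ j, j ≠ i → expOf ν' j = expOf ν j) :
    zdMon ν' + expOf ν i = zdMon ν + expOf ν' i := by
  have hsum : ∑ j ∈ Finset.univ.erase i, expOf ν' j = ∑ j ∈ Finset.univ.erase i, expOf ν j :=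
    Finset.sum_congr rfl (fun j hj => h j (Finset.ne_of_mem_erase hj))
  rw [zdMon_eq, zdMon_eq, ← Finset.add_sum_erase _ _ (Finset.mem_univ i),
    ← Finset.add_sum_erase _ _ (Finset.mem_univ i), hsum]
  omega

lemma expOf_zeroM (i : Fin (m + n)) : expOf (zeroM p m n) i = 0 := by
  by_cases h : (i : ℕ) < m <;> simp [expOf, zeroM, h]

lemma zdMon_zeroM : zdMon (zeroM p m n) = 0 := by
  rw [zdMon_eq]
  simp [expOf_zeroM]

lemma compat_even {ν κ : Mon p m n} (h : compat ν κ) (jm : Fin m) :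
    (ν.1 jm : ℕ) + (κ.1 jm : ℕ) < p := by
  have hc : ((Fin.castAdd n jm : Fin (m + n)) : ℕ) < m := by simpa using jm.isLt
  have := h (Fin.castAdd n jm)
  rw [if_pos hc] at this
  simp only [expOf, dif_pos hc] at this
  have hj : (⟨((Fin.castAdd n jm : Fin (m + n)) : ℕ), hc⟩ : Fin m) = jm := by
    apply Fin.ext; simp
  rw [hj] at this
  have : 0 < p := NeZero.pos p
  omega

lemma compat_disj {ν κ : Mon p m n} (h : compat ν κ) : ν.2 ∩ κ.2 = ∅ := by
  ext k
  simp only [Finset.mem_inter, Finset.notMem_empty, iff_false, not_and]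
  intro hk hk'
  have hc : ¬ ((Fin.natAdd m k : Fin (m + n)) : ℕ) < m := by simp
  have := h (Fin.natAdd m k)
  rw [if_neg hc] at this
  simp only [expOf, dif_neg hc] at this
  have hj : (⟨((Fin.natAdd m k : Fin (m + n)) : ℕ) - m, by have := (Fin.natAdd m k).isLt; omega⟩ : Fin n) = k := by
    apply Fin.ext; simp
  rw [hj, if_pos hk, if_pos hk'] at this
  omega

lemma expOf_sumV {ν κ : Mon p m n} (h : compat ν κ) (j : Fin (m + n)) :
    expOf (sumV ν κ) j = expOf ν j + expOf κ j := by
  by_cases hj : (j : ℕ) < m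
  · have hlt : (ν.1 ⟨j, hj⟩ : ℕ) + (κ.1 ⟨j, hj⟩ : ℕ) < p := compat_even h ⟨j, hj⟩
    simp only [expOf, sumV, dif_pos hj]
    exact Nat.mod_eq_of_lt hlt
  · have := h j
    rw [if_neg hj] at this
    simp only [expOf, dif_neg hj] at this ⊢
    simp only [sumV, Finset.mem_union]
    split_ifs at this ⊢ <;> simp_all <;> omega

lemma zdMon_sumV {ν κ : Mon p m n} (h : compat ν κ) :
    zdMon (sumV ν κ) = zdMon ν + zdMon κ := by
  rw [zdMon_eq, zdMon_eq, zdMon_eq,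
    Finset.sum_congr rfl (fun j _ => expOf_sumV h j), ← Finset.sum_add_distrib]


lemma pd_eq_dEv {i : Fin (m + n)} (h : (i : ℕ) < m) (f : O F p m n) :
    pd i f = dEv ⟨i, h⟩ f := by
  have hi : finSumFinEquiv (Sum.inl (⟨i, h⟩ : Fin m)) = i := by
    apply Fin.ext; simp
  have hs : finSumFinEquiv.symm i = Sum.inl (⟨i, h⟩ : Fin m) := by
    rw [Equiv.symm_apply_eq, hi]
  rw [pd, hs]
  rfl

lemma pd_eq_dOd {i : Fin (m + n)} (h : ¬ (i : ℕ) < m) (f : O F p m n) :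
    pd i f = dOd (⟨(i : ℕ) - m, by have := i.isLt; omega⟩ : Fin n) f := by
  have hi : finSumFinEquiv (Sum.inr (⟨(i : ℕ) - m, by have := i.isLt; omega⟩ : Fin n)) = i := by
    apply Fin.ext; simp; omega
  have hs : finSumFinEquiv.symm i = Sum.inr (⟨(i : ℕ) - m, by have := i.isLt; omega⟩ : Fin n) := by
    rw [Equiv.symm_apply_eq, hi]
  rw [pd, hs]
  rfl

lemma dEv_delta (j : Fin m) (B : Mon p m n) :
    dEv (F := F) j (delta B) =
      if 1 ≤ (B.1 j : ℕ) then
        delta (Function.update B.1 j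
          ⟨(B.1 j : ℕ) - 1, lt_of_le_of_lt (Nat.sub_le _ _) (B.1 j).isLt⟩, B.2)
      else 0 := by
  funext μ
  by_cases hB : 1 ≤ (B.1 j : ℕ)
  · rw [if_pos hB]
    set B' : Mon p m n := (Function.update B.1 j
      ⟨(B.1 j : ℕ) - 1, lt_of_le_of_lt (Nat.sub_le _ _) (B.1 j).isLt⟩, B.2) with hB'
    by_cases hlt : (μ.1 j : ℕ) + 1 < p
    · simp only [dEv, dif_pos hlt, delta]
      have hiff : ((Function.update μ.1 j ⟨(μ.1 j : ℕ) + 1, hlt⟩, μ.2) = B) ↔ (μ = B') := by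
        constructor
        · intro h1
          have h11 : Function.update μ.1 j ⟨(μ.1 j : ℕ) + 1, hlt⟩ = B.1 := (Prod.ext_iff.mp h1).1
          have h12 : μ.2 = B.2 := (Prod.ext_iff.mp h1).2
          have hval : (μ.1 j : ℕ) + 1 = (B.1 j : ℕ) := by
            have := congrFun h11 j
            rw [Function.update_self] at this
            exact congrArg Fin.val this
          have : μ.1 = B'.1 := by
            funext k
            by_cases hk : k = j
            · subst hk
              rw [hB']
              simp only [Function.update_self]
              apply Fin.ext
              simp only
              omega
            · have := congrFun h11 k
              rw [Function.update_of_ne hk] at this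
              rw [hB']
              simp only
              rw [Function.update_of_ne hk]
              exact this
          exact Prod.ext this h12
        · intro h1
          subst h1
          apply Prod.ext
          · simp only [hB']
            rw [Function.update_idem]
            rw [show (⟨((Function.update B.1 j ⟨(B.1 j : ℕ) - 1, lt_of_le_of_lt (Nat.sub_le _ _) (B.1 j).isLt⟩ : Fin m → Fin p) j : ℕ) + 1, hlt⟩ : Fin p) = B.1 j from by
              apply Fin.ext
              simp only [Function.update_self]
              omega]
            exact Function.update_eq_self j B.1
          · rfl
      rw [if_congr hiff rfl rfl]
    · simp only [dEv, dif_neg hlt, delta]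
      rw [if_neg]
      intro hμ
      apply hlt
      rw [hμ, hB']
      simp only [Function.update_self]
      have := (B.1 j).isLt
      omega
  · rw [if_neg hB]
    simp only [dEv, delta, Pi.zero_apply]
    by_cases hlt : (μ.1 j : ℕ) + 1 < p
    · rw [dif_pos hlt, if_neg]
      intro h1
      have h11 : Function.update μ.1 j ⟨(μ.1 j : ℕ) + 1, hlt⟩ j = B.1 j :=
        congrFun ((Prod.ext_iff.mp h1).1) j
      rw [Function.update_self] at h11
      have := congrArg Fin.val h11
      simp only at this
      omega
    · rw [dif_neg hlt]

lemma dOd_delta (j : Fin n) (B : Mon p m n) :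
    dOd (F := F) j (delta B) =
      if j ∈ B.2 then
        ((-1 : F)) ^ ((B.2.erase j).filter (fun k => k < j)).card • delta (B.1, B.2.erase j)
      else 0 := by
  funext μ
  by_cases hj : j ∈ B.2
  · rw [if_pos hj]
    by_cases hμ : j ∈ μ.2
    · have hne : μ ≠ (B.1, B.2.erase j) := by
        intro h1; rw [h1] at hμ; exact (Finset.notMem_erase j B.2) hμ
      simp only [dOd, if_pos hμ, Pi.smul_apply, delta, if_neg hne, smul_zero]
    · by_cases he : μ = (B.1, B.2.erase j)
      · have h1 : (μ.1, insert j μ.2) = B := by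
          rw [he]
          exact Prod.ext_iff.mpr ⟨rfl, Finset.insert_erase hj⟩
        have h2 : μ.2 = B.2.erase j := by rw [he]
        simp only [dOd, if_neg hμ, delta, if_pos h1, Pi.smul_apply, if_pos he, smul_eq_mul,
          mul_one]
        rw [h2]
      · have h1 : (μ.1, insert j μ.2) ≠ B := by
          intro h1
          apply he
          exact Prod.ext_iff.mpr ⟨(Prod.ext_iff.mp h1).1,
            by rw [← (Prod.ext_iff.mp h1).2]; exact (Finset.erase_insert hμ).symm⟩
        simp only [dOd, if_neg hμ, delta, if_neg h1, mul_zero, Pi.smul_apply, if_neg he, smul_zero]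
  · rw [if_neg hj]
    by_cases hμ : j ∈ μ.2
    · simp only [dOd, if_pos hμ, Pi.zero_apply]
    · have h1 : (μ.1, insert j μ.2) ≠ B := by
        intro h1; apply hj; rw [← (Prod.ext_iff.mp h1).2]; exact Finset.mem_insert_self j μ.2
      simp only [dOd, if_neg hμ, delta, if_neg h1, mul_zero, Pi.zero_apply]

lemma exp_even {i : Fin (m + n)} (hi : (i : ℕ) < m) (B : Mon p m n) :
    expOf B i = (B.1 ⟨i, hi⟩ : ℕ) := by
  simp [expOf, hi]

lemma exp_odd {i : Fin (m + n)} (hi : ¬ (i : ℕ) < m) (B : Mon p m n) :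
    expOf B i = if (⟨(i : ℕ) - m, by have := i.isLt; omega⟩ : Fin n) ∈ B.2 then 1 else 0 := by
  simp [expOf, hi]

lemma pd_delta_of_pos {i : Fin (m + n)} {B : Mon p m n} (h : 1 ≤ expOf B i) :
    ∃ c : F, c ≠ 0 ∧ pd i (delta B) = c • (delta (subV i B) : O F p m n) := by
  by_cases hi : (i : ℕ) < m
  · refine ⟨1, one_ne_zero, ?_⟩
    rw [exp_even hi] at h
    rw [pd_eq_dEv hi, dEv_delta, if_pos h, one_smul]
    simp only [subV, dif_pos hi]
  · rw [exp_odd hi] at h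
    set j : Fin n := ⟨(i : ℕ) - m, by have := i.isLt; omega⟩ with hjdef
    have hmem : j ∈ B.2 := by
      by_contra hc
      rw [if_neg hc] at h
      omega
    refine ⟨((-1 : F)) ^ ((B.2.erase j).filter (fun k => k < j)).card,
      pow_ne_zero _ (by norm_num : (-1 : F) ≠ 0), ?_⟩
    rw [pd_eq_dOd hi, dOd_delta, if_pos hmem]
    simp only [subV, dif_neg hi]
    rfl

lemma pd_delta_of_zero {i : Fin (m + n)} {B : Mon p m n} (h : expOf B i = 0) :
    pd i (delta B) = (0 : O F p m n) := by
  by_cases hi : (i : ℕ) < m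
  · rw [exp_even hi] at h
    rw [pd_eq_dEv hi, dEv_delta, if_neg (by omega)]
  · rw [exp_odd hi] at h
    have hmem : (⟨(i : ℕ) - m, by have := i.isLt; omega⟩ : Fin n) ∉ B.2 := by
      by_contra hc
      rw [if_pos hc] at h
      omega
    rw [pd_eq_dOd hi, dOd_delta, if_neg hmem]

lemma mulO_zero_left (g : O F p m n) : mulO (0 : O F p m n) g = 0 := by
  funext μ; simp [mulO]

lemma mulO_zero_right (f : O F p m n) : mulO f (0 : O F p m n) = 0 := by
  funext μ; simp [mulO]

lemma mulO_smul_right (c : F) (f g : O F p m n) : mulO f (c • g) = c • mulO f g := by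
  funext μ
  simp only [mulO, Pi.smul_apply, smul_eq_mul, Finset.mul_sum]
  apply Finset.sum_congr rfl
  intro ν _
  apply Finset.sum_congr rfl
  intro κ _
  split
  · ring
  · ring

lemma pd_zero (i : Fin (m + n)) : pd i (0 : O F p m n) = 0 := by
  by_cases hi : (i : ℕ) < m
  · rw [pd_eq_dEv hi]
    funext μ
    simp only [dEv, Pi.zero_apply]
    split <;> rfl
  · rw [pd_eq_dOd hi]
    funext μ
    simp only [dOd, Pi.zero_apply, mul_zero]
    split <;> rfl

lemma pd_smul (i : Fin (m + n)) (c : F) (f : O F p m n) : pd i (c • f) = c • pd i f := by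
  by_cases hi : (i : ℕ) < m
  · rw [pd_eq_dEv hi, pd_eq_dEv hi]
    funext μ
    simp only [dEv, Pi.smul_apply, smul_eq_mul]
    split
    · rfl
    · rw [mul_zero]
  · rw [pd_eq_dOd hi, pd_eq_dOd hi]
    funext μ
    simp only [dOd, Pi.smul_apply, smul_eq_mul]
    split
    · rw [mul_zero]
    · ring

lemma act_single (l : Fin (m + n)) (f : O F p m n) (g : O F p m n) :
    act (Pi.single l f : W F p m n) g = mulO f (pd l g) := by
  rw [act, Fintype.sum_eq_single l (fun b hb => by rw [Pi.single_eq_of_ne hb, mulO_zero_left]),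
    Pi.single_eq_same]

lemma act_zero_left (g : O F p m n) : act (0 : W F p m n) g = 0 := by
  simp [act, mulO_zero_left]

lemma act_zero_right (D : W F p m n) : act D (0 : O F p m n) = 0 := by
  simp [act, pd_zero, mulO_zero_right]

lemma projO_zero (b : ZMod 2) : projO b (0 : O F p m n) = 0 := by
  funext μ; simp [projO]

lemma projO_delta (b : ZMod 2) (ν : Mon p m n) :
    projO b (delta ν : O F p m n) = if parMon ν = b then delta ν else 0 := by
  funext μ
  by_cases hμ : μ = ν
  · subst hμ
    by_cases hb : parMon μ = b <;> simp [projO, delta, hb]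
  · by_cases hb : parMon ν = b <;> simp [projO, delta, hμ, hb] <;> split <;> rfl

lemma projW_single (b : ZMod 2) (i : Fin (m + n)) (ν : Mon p m n) :
    projW b (Pi.single i (delta ν) : W F p m n)
      = if b = parMon ν + parIdx m i then Pi.single i (delta ν) else 0 := by
  funext k
  simp only [projW]
  by_cases hk : k = i
  · subst hk
    rw [Pi.single_eq_same, projO_delta]
    have hiff : (parMon ν = b + parIdx m k) ↔ (b = parMon ν + parIdx m k) := by
      have : ∀ x y z : ZMod 2, x = y + z ↔ y = x + z := by decide
      exact this _ _ _
    by_cases hb : b = parMon ν + parIdx m k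
    · rw [if_pos (hiff.mpr hb), if_pos hb, Pi.single_eq_same]
    · rw [if_neg (fun h => hb (hiff.mp h)), if_neg hb]
      rfl
  · rw [Pi.single_eq_of_ne hk, projO_zero]
    by_cases hb : b = parMon ν + parIdx m i
    · rw [if_pos hb, Pi.single_eq_of_ne hk]
    · rw [if_neg hb]
      rfl

lemma bracketW_single (l i : Fin (m + n)) (A B : Mon p m n) :
    ∃ ε : F, bracketW (Pi.single l (delta A) : W F p m n) (Pi.single i (delta B))
      = (Pi.single i (mulO (delta A) (pd l (delta B))) : W F p m n)
        - ε • (Pi.single l (mulO (delta B) (pd i (delta A))) : W F p m n) := by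
  set pa := parMon A + parIdx m l with hpa
  set pb := parMon B + parIdx m i with hpb
  refine ⟨(-1 : F) ^ (pa * pb).val, ?_⟩
  rw [bracketW]
  rw [Fintype.sum_eq_single pa (fun a ha => by
    apply Finset.sum_eq_zero
    intro b _
    rw [projW_single, if_neg ha]
    funext k
    simp [act_zero_left, act_zero_right])]
  rw [Fintype.sum_eq_single pb (fun b hb => by
    rw [projW_single b i B, if_neg hb]
    funext k
    simp [act_zero_left, act_zero_right, projW_single])]
  rw [projW_single, if_pos rfl, projW_single, if_pos rfl]
  funext k
  simp only [Pi.sub_apply, Pi.smul_apply]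
  have e1 : act (Pi.single l (delta A) : W F p m n) ((Pi.single i (delta B) : W F p m n) k)
      = (Pi.single i (mulO (delta A) (pd l (delta B))) : W F p m n) k := by
    by_cases hk : k = i
    · subst hk; rw [Pi.single_eq_same, Pi.single_eq_same, act_single]
    · rw [Pi.single_eq_of_ne hk, Pi.single_eq_of_ne hk, act_zero_right]
  have e2 : act (Pi.single i (delta B) : W F p m n) ((Pi.single l (delta A) : W F p m n) k)
      = (Pi.single l (mulO (delta B) (pd i (delta A))) : W F p m n) k := by
    by_cases hk : k = l
    · subst hk; rw [Pi.single_eq_same, Pi.single_eq_same, act_single]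
    · rw [Pi.single_eq_of_ne hk, Pi.single_eq_of_ne hk, act_zero_right]
  rw [e1, e2]


lemma mulO_delta (ν κ : Mon p m n) (hc : ∀ j : Fin m, (ν.1 j : ℕ) + (κ.1 j : ℕ) < p)
    (hd : ν.2 ∩ κ.2 = ∅) :
    mulO (delta ν) (delta κ) =
      (((extSign ν.2 κ.2 : ℤ) : F) *
        ∏ j, ((((ν.1 j : ℕ) + (κ.1 j : ℕ)).choose (ν.1 j : ℕ) : ℕ) : F)) •
        (delta (sumV ν κ) : O F p m n) := by
  funext μ
  simp only [mulO]
  rw [Fintype.sum_eq_single ν (fun b hb => Finset.sum_eq_zero (fun κ' _ => by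
    simp [delta, hb]))]
  rw [Fintype.sum_eq_single κ (fun b hb => by simp [delta, hb])]
  by_cases hμ : μ = sumV ν κ
  · subst hμ
    have hcond : (∀ i, (ν.1 i : ℕ) + (κ.1 i : ℕ) = ((sumV ν κ).1 i : ℕ)) ∧
        ν.2 ∩ κ.2 = ∅ ∧ ν.2 ∪ κ.2 = (sumV ν κ).2 := by
      refine ⟨fun i => ?_, hd, rfl⟩
      simp only [sumV]
      exact (Nat.mod_eq_of_lt (hc i)).symm
    rw [if_pos hcond]
    have hch : ∀ i : Fin m, ((((sumV ν κ).1 i : ℕ).choose (ν.1 i : ℕ) : ℕ) : F)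
        = ((((ν.1 i : ℕ) + (κ.1 i : ℕ)).choose (ν.1 i : ℕ) : ℕ) : F) := by
      intro i
      simp only [sumV]
      rw [Nat.mod_eq_of_lt (hc i)]
    rw [Finset.prod_congr rfl (fun i _ => hch i)]
    simp [delta]
  · have hcond : ¬ ((∀ i, (ν.1 i : ℕ) + (κ.1 i : ℕ) = (μ.1 i : ℕ)) ∧
        ν.2 ∩ κ.2 = ∅ ∧ ν.2 ∪ κ.2 = μ.2) := by
      rintro ⟨c1, -, c3⟩
      apply hμ
      refine Prod.ext_iff.mpr ⟨funext fun j => ?_, c3.symm⟩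
      apply Fin.ext
      simp only [sumV]
      rw [Nat.mod_eq_of_lt (hc j)]
      exact (c1 j).symm
    rw [if_neg hcond]
    simp [delta, hμ]

lemma choose_cast_ne_zero [Fact p.Prime] [CharP F p] {a b : ℕ} (h : a + b < p) :
    (((a + b).choose a : ℕ) : F) ≠ 0 := by
  rw [Ne, CharP.cast_eq_zero_iff F p]
  intro hdvd
  have hfac : ((a + b).choose a) ∣ Nat.factorial (a + b) :=
    ⟨Nat.factorial a * Nat.factorial b, by
      rw [add_comm a b, ← Nat.add_choose_mul_factorial_mul_factorial b a]; ring⟩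
  have := (Nat.Prime.dvd_factorial (Fact.out)).mp (hdvd.trans hfac)
  omega

lemma mulO_delta_compat [Fact p.Prime] [CharP F p] {ν κ : Mon p m n} (h : compat ν κ) :
    ∃ c : F, c ≠ 0 ∧ mulO (delta ν) (delta κ) = c • (delta (sumV ν κ) : O F p m n) := by
  refine ⟨_, ?_, mulO_delta ν κ (compat_even h) (compat_disj h)⟩
  apply mul_ne_zero
  · rw [extSign]
    push_cast
    exact pow_ne_zero _ (by norm_num)
  · apply Finset.prod_ne_zero_iff.mpr
    intro j _
    exact choose_cast_ne_zero (compat_even h j)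

/-- The generating set: the local part of `W(m,n)`. -/
abbrev SS (F : Type*) [Field F] (p m n : ℕ) : Set (W F p m n) :=
  {E : W F p m n | inW (-1) E ∨ inW 0 E ∨ inW 1 E}

lemma genBy_sum {S : Set (W F p m n)} {ι : Type*} (s : Finset ι) (f : ι → W F p m n)
    (h : ∀ x ∈ s, genBy S (f x)) : genBy S (∑ x ∈ s, f x) :=
  Finset.sum_induction f _ (fun _ _ => genBy.add) genBy.zero h

lemma genBy_of_smul {S : Set (W F p m n)} {c : F} (hc : c ≠ 0) {x : W F p m n}
    (h : genBy S (c • x)) : genBy S x := by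
  have h2 := genBy.smul c⁻¹ h
  rwa [smul_smul, inv_mul_cancel₀ hc, one_smul] at h2

lemma single_inW (i : Fin (m + n)) (ν : Mon p m n) :
    inW ((zdMon ν : ℤ) - 1) (Pi.single i (delta ν) : W F p m n) := by
  intro k μ hne
  by_cases hk : k = i
  · subst hk
    rw [Pi.single_eq_same] at hne
    have hμ : μ = ν := by
      by_contra hc
      exact hne (if_neg hc)
    rw [hμ]
    omega
  · rw [Pi.single_eq_of_ne hk] at hne
    simp at hne

lemma single_mem_S (i : Fin (m + n)) (ν : Mon p m n) (h2 : zdMon ν ≤ 2) :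
    (Pi.single i (delta ν) : W F p m n) ∈ SS F p m n := by
  have h := single_inW (F := F) i ν
  rcases (by omega : zdMon ν = 0 ∨ zdMon ν = 1 ∨ zdMon ν = 2) with h0 | h0 | h0 <;> rw [h0] at h
  · exact Or.inl (by norm_num at h; exact h)
  · exact Or.inr (Or.inl (by norm_num at h; exact h))
  · exact Or.inr (Or.inr (by norm_num at h; exact h))

lemma W_decomp (D : W F p m n) :
    D = ∑ i : Fin (m + n), ∑ ν : Mon p m n, D i ν • (Pi.single i (delta ν) : W F p m n) := by
  funext k μ
  simp only [Finset.sum_apply, Pi.smul_apply, smul_eq_mul]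
  rw [Fintype.sum_eq_single k (fun b hb => Finset.sum_eq_zero (fun ν _ => by
    rw [Pi.single_eq_of_ne (Ne.symm hb), Pi.zero_apply, mul_zero]))]
  simp only [Pi.single_eq_same]
  rw [Fintype.sum_eq_single μ (fun ν hν => by
    have hz : delta (F := F) ν μ = 0 := if_neg (fun h => hν h.symm)
    rw [hz, mul_zero])]
  simp [delta]

/-- The monomial `ν` is in "good position" relative to the index `i`. -/
def good (i : Fin (m + n)) (ν : Mon p m n) : Prop :=
  ∃ t, t ≠ i ∧ (2 ≤ expOf ν t ∨ ∃ s, s ≠ i ∧ s ≠ t ∧ 1 ≤ expOf ν s ∧ 1 ≤ expOf ν t)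

lemma exp_pairMon (t s' : Fin (m + n)) (hp1 : 1 < p)
    (hcond : s' = t → ((t : ℕ) < m ∧ 2 < p)) (j : Fin (m + n)) :
    expOf (addV t (addV s' (zeroM p m n)) : Mon p m n) j
      = (if j = t then 1 else 0) + (if j = s' then 1 else 0) := by
  by_cases hjt : j = t
  · subst hjt
    by_cases hst : s' = j
    · subst hst
      have h1 : expOf (addV s' (zeroM p m n)) s' = 1 :=
        expOf_addV_self_zero _ (expOf_zeroM s') hp1
      rw [expOf_addV_self_even (hcond rfl).1 _ (by rw [h1]; exact (hcond rfl).2), h1]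
      simp
    · rw [if_pos rfl, if_neg (fun h => hst h.symm)]
      rw [expOf_addV_self_zero _ (by rw [expOf_addV_ne (fun h => hst h.symm), expOf_zeroM]) hp1]
  · rw [if_neg hjt, expOf_addV_ne hjt]
    by_cases hjs : j = s'
    · subst hjs
      rw [expOf_addV_self_zero _ (expOf_zeroM j) hp1]
      simp
    · rw [expOf_addV_ne hjs, expOf_zeroM, if_neg hjs]

lemma zdMon_addV' {j : Fin (m + n)} {μ : Mon p m n}
    (h : expOf (addV j μ) j = expOf μ j + 1) : zdMon (addV j μ) = zdMon μ + 1 := by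
  have h2 := zdMon_shift j (fun k hk => expOf_addV_ne hk μ)
  omega

lemma zdMon_subV' {j : Fin (m + n)} {μ : Mon p m n}
    (h : 1 ≤ expOf μ j) : zdMon (subV j μ) = zdMon μ - 1 := by
  have h2 := zdMon_shift j (fun k hk => expOf_subV_ne hk μ)
  have h3 := expOf_subV_self j μ
  omega

lemma zdMon_of_exps {A : Mon p m n} {g : Fin (m + n) → ℕ} (h : ∀ j, expOf A j = g j) :
    zdMon A = ∑ j, g j := by
  rw [zdMon_eq]
  exact Finset.sum_congr rfl (fun j _ => h j)

lemma gen_main [Fact p.Prime] [CharP F p] {d : ℕ}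
    (IH : ∀ e, e < d → ∀ (κ : Mon p m n) (j : Fin (m + n)), zdMon κ = e →
      genBy (SS F p m n) (Pi.single j (delta κ) : W F p m n))
    (hd3 : 3 ≤ d) (ν A B : Mon p m n) (i l : Fin (m + n))
    (hzdA : zdMon A = 2) (hzdB : zdMon B = d - 1)
    (hAi : expOf A i = 0) (hBl : 1 ≤ expOf B l)
    (hcompat : compat A (subV l B))
    (hsum : sumV A (subV l B) = ν) :
    genBy (SS F p m n) (Pi.single i (delta ν) : W F p m n) := by
  obtain ⟨ε, hbr⟩ := bracketW_single (F := F) l i A B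
  obtain ⟨c1, hc1, hpd⟩ := pd_delta_of_pos (F := F) hBl
  obtain ⟨c2, hc2, hmul⟩ := mulO_delta_compat (F := F) hcompat
  rw [pd_delta_of_zero hAi, mulO_zero_right, Pi.single_zero, smul_zero, sub_zero,
    hpd, mulO_smul_right, hmul, hsum, smul_smul, Pi.single_smul] at hbr
  have hXS : (Pi.single l (delta A) : W F p m n) ∈ SS F p m n :=
    single_mem_S l A (le_of_eq hzdA)
  have hY : genBy (SS F p m n) (Pi.single i (delta B) : W F p m n) :=
    IH (d - 1) (by omega) B i hzdB
  have hgen := genBy.br (genBy.base hXS) hY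
  rw [hbr] at hgen
  exact genBy_of_smul (mul_ne_zero hc1 hc2) hgen

lemma gen_good [Fact p.Prime] [CharP F p] (hp : 3 < p) {d : ℕ}
    (IH : ∀ e, e < d → ∀ (κ : Mon p m n) (j : Fin (m + n)), zdMon κ = e →
      genBy (SS F p m n) (Pi.single j (delta κ) : W F p m n))
    (hd3 : 3 ≤ d) (ν : Mon p m n) (i : Fin (m + n)) (hν : zdMon ν = d) (hg : good i ν) :
    genBy (SS F p m n) (Pi.single i (delta ν) : W F p m n) := by
  obtain ⟨t, hti, hcase⟩ := hg
  have hp1 : 1 < p := by omega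
  obtain ⟨s', hsi, hs1, ht1, hst⟩ :
      ∃ s', s' ≠ i ∧ 1 ≤ expOf ν s' ∧ 1 ≤ expOf ν t ∧
        (s' = t → 2 ≤ expOf ν t ∧ (t : ℕ) < m) := by
    rcases hcase with h2 | ⟨s, hsi, hst, hs1, ht1⟩
    · have htm : (t : ℕ) < m := by
        by_contra hcm
        have := expOf_le ν t
        rw [if_neg hcm] at this
        omega
      exact ⟨t, hti, by omega, by omega, fun _ => ⟨h2, htm⟩⟩
    · exact ⟨s, hsi, hs1, ht1, fun he => absurd he hst⟩
  have hexpA : ∀ j, expOf (addV t (addV s' (zeroM p m n)) : Mon p m n) j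
      = (if j = t then 1 else 0) + (if j = s' then 1 else 0) :=
    exp_pairMon t s' hp1 (fun he => ⟨(hst he).2, by omega⟩)
  have hzdA : zdMon (addV t (addV s' (zeroM p m n)) : Mon p m n) = 2 := by
    rw [zdMon_of_exps hexpA, Finset.sum_add_distrib]
    simp [Finset.sum_ite_eq']
  have hts2 : ∀ j, (if j = t then 1 else 0) + (if j = s' then 1 else 0) ≤ expOf ν j := by
    intro j
    by_cases hjt : j = t <;> by_cases hjs : j = s'
    · have h2 := (hst (hjs.symm.trans hjt)).1
      rw [if_pos hjt, if_pos hjs, hjt]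
      omega
    · rw [if_pos hjt, if_neg hjs, hjt]
      omega
    · rw [if_neg hjt, if_pos hjs, hjs]
      omega
    · rw [if_neg hjt, if_neg hjs]
      omega
  have hexpC : ∀ j, expOf (subV t (subV s' ν)) j
      = expOf ν j - ((if j = t then 1 else 0) + (if j = s' then 1 else 0)) := by
    intro j
    by_cases hjt : j = t <;> by_cases hjs : j = s'
    · rw [if_pos hjt, if_pos hjs, hjt, show t = s' from hjt.symm.trans hjs,
        expOf_subV_self, expOf_subV_self]
      omega
    · rw [if_pos hjt, if_neg hjs, hjt, expOf_subV_self,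
        expOf_subV_ne (show t ≠ s' from fun h => hjs (hjt.trans h))]
    · rw [if_neg hjt, if_pos hjs, hjs,
        expOf_subV_ne (show s' ≠ t from fun h => hjt (hjs.trans h)), expOf_subV_self]
    · rw [if_neg hjt, if_neg hjs, expOf_subV_ne hjt, expOf_subV_ne hjs]
      omega
  have hzdB : zdMon (subV s' ν) = d - 1 := by
    rw [zdMon_subV' hs1, hν]
  have hBt : 1 ≤ expOf (subV s' ν) t := by
    by_cases hts : s' = t
    · subst hts
      rw [expOf_subV_self]
      have := (hst rfl).1
      omega
    · rw [expOf_subV_ne (fun h => hts h.symm)]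
      exact ht1
  have hcompat : compat (addV t (addV s' (zeroM p m n))) (subV t (subV s' ν)) := by
    intro j
    have h1 := hts2 j
    have h2 := expOf_le ν j
    rw [hexpA j, hexpC j]
    by_cases hjm : (j : ℕ) < m
    · rw [if_pos hjm]
      rw [if_pos hjm] at h2
      omega
    · rw [if_neg hjm]
      rw [if_neg hjm] at h2
      omega
  have hsum : sumV (addV t (addV s' (zeroM p m n))) (subV t (subV s' ν)) = ν := by
    apply mon_ext
    intro j
    rw [expOf_sumV hcompat j, hexpA j, hexpC j]
    have := hts2 j
    omega
  have hAi : expOf (addV t (addV s' (zeroM p m n)) : Mon p m n) i = 0 := by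
    rw [hexpA i, if_neg (show ¬ i = t from fun h => hti h.symm),
      if_neg (show ¬ i = s' from fun h => hsi h.symm)]
  exact gen_main IH hd3 ν _ _ i t hzdA hzdB hAi hBt
    (by
      have : subV t (subV s' ν) = subV t (subV s' ν) := rfl
      exact hcompat) hsum


lemma gen_bad [Fact p.Prime] [CharP F p] (hp : 3 < p) (hmn : 3 < m + n) {d : ℕ}
    (IH : ∀ e, e < d → ∀ (κ : Mon p m n) (j : Fin (m + n)), zdMon κ = e →
      genBy (SS F p m n) (Pi.single j (delta κ) : W F p m n))
    (hd3 : 3 ≤ d) (ν : Mon p m n) (i : Fin (m + n)) (hν : zdMon ν = d)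
    (hbad : ¬ good i ν) :
    genBy (SS F p m n) (Pi.single i (delta ν) : W F p m n) := by
  have hp1 : 1 < p := by omega
  have hlt2 : ∀ t, t ≠ i → expOf ν t ≤ 1 := by
    intro t ht
    by_contra hc
    exact hbad ⟨t, ht, Or.inl (by omega)⟩
  have hpair : ∀ t s, t ≠ i → s ≠ i → s ≠ t → 1 ≤ expOf ν t → expOf ν s = 0 := by
    intro t s ht hs hst h1
    by_contra hc
    exact hbad ⟨t, ht, Or.inr ⟨s, hs, hst, by omega, h1⟩⟩
  have hdec : zdMon ν = expOf ν i + ∑ j ∈ Finset.univ.erase i, expOf ν j := by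
    rw [zdMon_eq]
    exact (Finset.add_sum_erase _ _ (Finset.mem_univ i)).symm
  have hsummax : ∑ j ∈ Finset.univ.erase i, expOf ν j ≤ 1 := by
    by_cases hex : ∃ t ∈ Finset.univ.erase i, 1 ≤ expOf ν t
    · obtain ⟨t, htmem, ht1⟩ := hex
      have hti : t ≠ i := Finset.ne_of_mem_erase htmem
      rw [Finset.sum_eq_single_of_mem t htmem
        (fun s hs hst => hpair t s hti (Finset.ne_of_mem_erase hs) hst ht1)]
      exact hlt2 t hti
    · push_neg at hex
      rw [Finset.sum_eq_zero (fun j hj => by have := hex j hj; omega)]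
      omega
  have hi2 : 2 ≤ expOf ν i := by omega
  have him : (i : ℕ) < m := by
    by_contra hcm
    have := expOf_le ν i
    rw [if_neg hcm] at this
    omega
  obtain ⟨s, hsi, hs0⟩ : ∃ s, s ≠ i ∧ expOf ν s = 0 := by
    obtain ⟨j1, j2, hj12, hj1i, hj2i⟩ :
        ∃ j1 j2 : Fin (m + n), j1 ≠ j2 ∧ j1 ≠ i ∧ j2 ≠ i := by
      have h0 : (0 : ℕ) < m + n := by omega
      have h1 : (1 : ℕ) < m + n := by omega
      have h2 : (2 : ℕ) < m + n := by omega
      have hne : ∀ (a b : ℕ) (hA : a < m + n) (hB : b < m + n), a ≠ b →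
          (⟨a, hA⟩ : Fin (m + n)) ≠ ⟨b, hB⟩ :=
        fun a b hA hB hab h => hab (congrArg Fin.val h)
      by_cases ha : i = (⟨0, h0⟩ : Fin (m + n))
      · exact ⟨⟨1, h1⟩, ⟨2, h2⟩, hne 1 2 h1 h2 (by norm_num),
          by rw [ha]; exact hne 1 0 h1 h0 (by norm_num),
          by rw [ha]; exact hne 2 0 h2 h0 (by norm_num)⟩
      · by_cases hb : i = (⟨1, h1⟩ : Fin (m + n))
        · exact ⟨⟨0, h0⟩, ⟨2, h2⟩, hne 0 2 h0 h2 (by norm_num),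
            by rw [hb]; exact hne 0 1 h0 h1 (by norm_num),
            by rw [hb]; exact hne 2 1 h2 h1 (by norm_num)⟩
        · exact ⟨⟨0, h0⟩, ⟨1, h1⟩, hne 0 1 h0 h1 (by norm_num),
            fun h => ha h.symm, fun h => hb h.symm⟩
    by_cases h1 : expOf ν j1 = 0
    · exact ⟨j1, hj1i, h1⟩
    · exact ⟨j2, hj2i, hpair j1 j2 hj1i hj2i hj12.symm (by omega)⟩
  have hexpA : ∀ j, expOf (addV i (addV i (zeroM p m n)) : Mon p m n) j
      = (if j = i then 1 else 0) + (if j = i then 1 else 0) :=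
    exp_pairMon i i hp1 (fun _ => ⟨him, by omega⟩)
  have hzdA : zdMon (addV i (addV i (zeroM p m n)) : Mon p m n) = 2 := by
    rw [zdMon_of_exps hexpA, Finset.sum_add_distrib]
    simp [Finset.sum_ite_eq']
  have hCexp : ∀ j, expOf (subV i (subV i ν)) j = expOf ν j - (if j = i then 2 else 0) := by
    intro j
    by_cases hj : j = i
    · rw [if_pos hj, hj, expOf_subV_self, expOf_subV_self]
      omega
    · rw [if_neg hj, expOf_subV_ne hj, expOf_subV_ne hj]
      omega
  have hCs : expOf (subV i (subV i ν)) s = 0 := by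
    rw [expOf_subV_ne hsi, expOf_subV_ne hsi]
    exact hs0
  have hBexp : ∀ j, expOf (addV s (subV i (subV i ν))) j
      = (if j = s then 1 else 0) + expOf (subV i (subV i ν)) j := by
    intro j
    by_cases hj : j = s
    · rw [if_pos hj, hj, expOf_addV_self_zero _ hCs hp1, hCs]
    · rw [if_neg hj, expOf_addV_ne hj]
      omega
  have hzdC : zdMon (subV i (subV i ν)) = d - 2 := by
    have h1 := zdMon_subV' (show 1 ≤ expOf ν i by omega)
    have h2 := zdMon_subV' (show 1 ≤ expOf (subV i ν) i by rw [expOf_subV_self]; omega)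
    omega
  have hzdB : zdMon (addV s (subV i (subV i ν))) = d - 1 := by
    have := zdMon_addV' (show expOf (addV s (subV i (subV i ν))) s
      = expOf (subV i (subV i ν)) s + 1 by rw [expOf_addV_self_zero _ hCs hp1, hCs])
    omega
  have hCB : subV s (addV s (subV i (subV i ν))) = subV i (subV i ν) := subV_addV hCs hp1
  have hBs : 1 ≤ expOf (addV s (subV i (subV i ν))) s := by
    rw [expOf_addV_self_zero _ hCs hp1]
  have hcompatAC : compat (addV i (addV i (zeroM p m n))) (subV i (subV i ν)) := by
    intro j
    rw [hexpA j, hCexp j]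
    by_cases hj : j = i
    · rw [if_pos hj, if_pos hj, hj, if_pos him]
      have h2 := expOf_le ν i
      rw [if_pos him] at h2
      omega
    · rw [if_neg hj, if_neg hj]
      have h2 := expOf_le ν j
      by_cases hjm : (j : ℕ) < m
      · rw [if_pos hjm]; rw [if_pos hjm] at h2; omega
      · rw [if_neg hjm]; rw [if_neg hjm] at h2; omega
  have hsumAC : sumV (addV i (addV i (zeroM p m n))) (subV i (subV i ν)) = ν := by
    apply mon_ext
    intro j
    rw [expOf_sumV hcompatAC j, hexpA j, hCexp j]
    by_cases hj : j = i
    · rw [if_pos hj, if_pos hj, hj]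
      omega
    · rw [if_neg hj, if_neg hj]
      omega
  have hAi2 : 1 ≤ expOf (addV i (addV i (zeroM p m n)) : Mon p m n) i := by
    rw [hexpA i, if_pos rfl]
    omega
  have hA1exp : ∀ j, expOf (subV i (addV i (addV i (zeroM p m n)))) j
      = if j = i then 1 else 0 := by
    intro j
    by_cases hj : j = i
    · rw [if_pos hj, hj, expOf_subV_self, hexpA i, if_pos rfl]
    · rw [if_neg hj, expOf_subV_ne hj, hexpA j, if_neg hj]
  have hcompatBA1 : compat (addV s (subV i (subV i ν)))
      (subV i (addV i (addV i (zeroM p m n)))) := by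
    intro j
    rw [hBexp j, hCexp j, hA1exp j]
    by_cases hj : j = i
    · rw [if_pos hj, if_neg (show ¬ j = s from fun h => hsi (h.symm.trans hj)), if_pos hj, hj,
        if_pos him]
      have h2 := expOf_le ν i
      rw [if_pos him] at h2
      omega
    · rw [if_neg hj, if_neg hj]
      by_cases hjs : j = s
      · rw [if_pos hjs, hjs]
        by_cases hsm : (s : ℕ) < m
        · rw [if_pos hsm]; omega
        · rw [if_neg hsm]; omega
      · rw [if_neg hjs]
        have h2 := expOf_le ν j
        by_cases hjm : (j : ℕ) < m
        · rw [if_pos hjm]; rw [if_pos hjm] at h2; omega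
        · rw [if_neg hjm]; rw [if_neg hjm] at h2; omega
  obtain ⟨ε, hbr⟩ := bracketW_single (F := F) s i (addV i (addV i (zeroM p m n)))
    (addV s (subV i (subV i ν)))
  obtain ⟨c1, hc1, hpd1⟩ := pd_delta_of_pos (F := F) hBs
  rw [hCB] at hpd1
  obtain ⟨c2, hc2, hmul1⟩ := mulO_delta_compat (F := F) hcompatAC
  obtain ⟨c3, hc3, hpd2⟩ := pd_delta_of_pos (F := F) hAi2
  obtain ⟨c4, hc4, hmul2⟩ := mulO_delta_compat (F := F) hcompatBA1
  rw [hpd1, mulO_smul_right, hmul1, hsumAC, hpd2, mulO_smul_right, hmul2] at hbr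
  simp only [smul_smul, Pi.single_smul] at hbr
  rw [eq_sub_iff_add_eq] at hbr
  set N := sumV (addV s (subV i (subV i ν))) (subV i (addV i (addV i (zeroM p m n)))) with hN
  have hNexp : ∀ j, expOf N j = ((if j = s then 1 else 0) +
      (expOf ν j - (if j = i then 2 else 0))) + (if j = i then 1 else 0) := by
    intro j
    rw [hN, expOf_sumV hcompatBA1 j, hBexp j, hCexp j, hA1exp j]
  have hzdN : zdMon N = d := by
    have hzdA1 : zdMon (subV i (addV i (addV i (zeroM p m n)))) = 1 := by
      have := zdMon_subV' hAi2
      omega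
    rw [hN, zdMon_sumV hcompatBA1, hzdB, hzdA1]
    omega
  have hNi : expOf N i = expOf ν i - 1 := by
    rw [hNexp i, if_neg (show ¬ i = s from fun h => hsi h.symm), if_pos rfl, if_pos rfl]
    omega
  have hgoodN : good s N := by
    by_cases hi3 : 3 ≤ expOf ν i
    · exact ⟨i, fun h => hsi h.symm, Or.inl (by omega)⟩
    · obtain ⟨t, hti, ht1⟩ : ∃ t, t ≠ i ∧ 1 ≤ expOf ν t := by
        by_contra hc
        push_neg at hc
        have hzero : ∑ j ∈ Finset.univ.erase i, expOf ν j = 0 :=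
          Finset.sum_eq_zero (fun j hj => by have := hc j (Finset.ne_of_mem_erase hj); omega)
        omega
      have hts : t ≠ s := fun h => by rw [h] at ht1; omega
      have hNt : expOf N t = expOf ν t := by
        rw [hNexp t, if_neg hts, if_neg hti, if_neg hti]
        omega
      refine ⟨t, hts, Or.inr ⟨i, fun h => hsi h.symm, fun h => hti h.symm, ?_, ?_⟩⟩
      · rw [hNi]; omega
      · rw [hNt]; exact ht1
  have hQ := gen_good hp IH hd3 N s hzdN hgoodN
  have hXS : (Pi.single s (delta (addV i (addV i (zeroM p m n)))) : W F p m n) ∈ SS F p m n :=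
    single_mem_S s _ (le_of_eq hzdA)
  have hY : genBy (SS F p m n)
      (Pi.single i (delta (addV s (subV i (subV i ν)))) : W F p m n) :=
    IH (d - 1) (by omega) _ i hzdB
  have hfinal : genBy (SS F p m n) ((c1 * c2) • (Pi.single i (delta ν) : W F p m n)) := by
    rw [← hbr]
    exact genBy.add (genBy.br (genBy.base hXS) hY) (genBy.smul _ hQ)
  exact genBy_of_smul (mul_ne_zero hc1 hc2) hfinal

end LocalGen

/-- `W(m,n)` is generated by its local part `W₋₁ ⊕ W₀ ⊕ W₁`. -/
theorem W_generated_by_local_part (F : Type*) [Field F] (p m n : ℕ) [Fact p.Prime]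
    [CharP F p] (hp : 3 < p) (hm : 2 ≤ m) (hn : 2 ≤ n) (D : W F p m n) :
    genBy {E : W F p m n | inW (-1) E ∨ inW 0 E ∨ inW 1 E} D := by
  have hmn : 3 < m + n := by omega
  have hgen : ∀ (d : ℕ) (ν : Mon p m n) (i : Fin (m + n)), zdMon ν = d →
      genBy (SS F p m n) (Pi.single i (delta ν) : W F p m n) := by
    intro d
    induction d using Nat.strong_induction_on with
    | _ d IH =>
      intro ν i hν
      by_cases hd2 : d ≤ 2
      · exact genBy.base (single_mem_S i ν (by omega))
      · have hd3 : 3 ≤ d := by omega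
        have IH' : ∀ e, e < d → ∀ (κ : Mon p m n) (j : Fin (m + n)), zdMon κ = e →
            genBy (SS F p m n) (Pi.single j (delta κ) : W F p m n) := fun e he => IH e he
        by_cases hg : good i ν
        · exact gen_good hp IH' hd3 ν i hν hg
        · exact gen_bad hp hmn IH' hd3 ν i hν hg
  show genBy (SS F p m n) D
  rw [W_decomp D]
  exact genBy_sum _ _ (fun i _ => genBy_sum _ _ (fun ν _ =>
    genBy.smul _ (hgen (zdMon ν) ν i rfl)))

end Cartan
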